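/- Let γ₁, γ₂ : [0,1] → ℝ³ be C¹ embeddings (injective, with nowhere-vanishing derivative) such that γ₁(0) = γ₂(0) and γ₁(1) = γ₂(1). Then there exist λ ≥ 1 and a bijection Φ : Cone(γ₁) → Cone(γ₂) such that λ⁻¹·‖p−q‖ ≤ ‖Φ(p)−Φ(q)‖ ≤ λ·‖p−q‖ for all p, q ∈ Cone(γ₁), Φ preserves the last coordinate (Φ maps Cone(γ₁) ∩ {t = s} onto Cone(γ₂) ∩ {t = s} for every s ∈ [0,1]), and Φ fixes the two boundary rays: Φ(s·γ₁(0), s) = (s·γ₂(0), s) and Φ(s·γ₁(1), s) = (s·γ₂(1), s) for all s ∈ [0,1]. -/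

import Mathlib

open Set Metric

noncomputable section

/-- The point `(v, s) ∈ ℝ³ × ℝ = ℝ⁴`. -/
def mk4 (v : EuclideanSpace ℝ (Fin 3)) (s : ℝ) : EuclideanSpace ℝ (Fin 4) :=
  (WithLp.equiv 2 (Fin 4 → ℝ)).symm ![v 0, v 1, v 2, s]

/-- The straight cone over a curve `γ : [0,1] → ℝ³` placed in the hyperplane `{t = 1}` of
`ℝ⁴`: `Cone(γ) = {(s·γ(u), s) : s ∈ [0,1], u ∈ [0,1]}`. -/
def ConeOver (γ : ℝ → EuclideanSpace ℝ (Fin 3)) : Set (EuclideanSpace ℝ (Fin 4)) :=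
  {p | ∃ s ∈ Set.Icc (0 : ℝ) 1, ∃ u ∈ Set.Icc (0 : ℝ) 1, p = mk4 (s • γ u) s}

/-- `γ` is a `C¹` embedding of `[0,1]`: continuously differentiable, injective, with
nowhere-vanishing derivative. -/
def IsC1Embedding (γ : ℝ → EuclideanSpace ℝ (Fin 3)) : Prop :=
  ContDiffOn ℝ 1 γ (Set.Icc 0 1) ∧ Set.InjOn γ (Set.Icc 0 1) ∧
    ∀ u ∈ Set.Icc (0 : ℝ) 1, derivWithin γ (Set.Icc 0 1) u ≠ 0


section Aux

lemma mk4_three (v : EuclideanSpace ℝ (Fin 3)) (s : ℝ) : mk4 v s 3 = s := by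
  simp [mk4]

lemma mk4_sub (v w : EuclideanSpace ℝ (Fin 3)) (s t : ℝ) :
    mk4 v s - mk4 w t = mk4 (v - w) (s - t) := by
  ext i
  fin_cases i <;> simp [mk4]

lemma norm_mk4_sq (v : EuclideanSpace ℝ (Fin 3)) (s : ℝ) :
    ‖mk4 v s‖ ^ 2 = ‖v‖ ^ 2 + s ^ 2 := by
  rw [EuclideanSpace.norm_eq, EuclideanSpace.norm_eq]
  rw [Real.sq_sqrt (by positivity), Real.sq_sqrt (by positivity)]
  simp [mk4, Fin.sum_univ_succ, sq_abs]
  ring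

lemma norm_le_norm_mk4 (v : EuclideanSpace ℝ (Fin 3)) (s : ℝ) : ‖v‖ ≤ ‖mk4 v s‖ := by
  have h := norm_mk4_sq v s
  nlinarith [norm_nonneg v, norm_nonneg (mk4 v s), sq_nonneg s]

lemma abs_le_norm_mk4 (v : EuclideanSpace ℝ (Fin 3)) (s : ℝ) : |s| ≤ ‖mk4 v s‖ := by
  have h := norm_mk4_sq v s
  nlinarith [abs_nonneg s, norm_nonneg (mk4 v s), sq_nonneg ‖v‖, sq_abs s]

lemma norm_mk4_le (v : EuclideanSpace ℝ (Fin 3)) (s : ℝ) : ‖mk4 v s‖ ≤ ‖v‖ + |s| := by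
  have h := norm_mk4_sq v s
  nlinarith [norm_nonneg v, norm_nonneg (mk4 v s), abs_nonneg s, sq_abs s,
    mul_nonneg (norm_nonneg v) (abs_nonneg s)]

lemma mk4_inj {v w : EuclideanSpace ℝ (Fin 3)} {s t : ℝ} (h : mk4 v s = mk4 w t) :
    v = w ∧ s = t := by
  have h3 : s = t := by
    have := congrArg (fun p => p 3) h
    simpa [mk4_three] using this
  refine ⟨?_, h3⟩
  ext i
  have := congrArg (fun p => p (Fin.castSucc i)) h
  fin_cases i <;> simpa [mk4] using this

variable {E : Type*} [NormedAddCommGroup E] [NormedSpace ℝ E]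

lemma lip_of_C1 {γ : ℝ → E} (h : ContDiffOn ℝ 1 γ (Icc 0 1)) :
    ∃ C > 0, ∀ u ∈ Icc (0:ℝ) 1, ∀ v ∈ Icc (0:ℝ) 1, ‖γ u - γ v‖ ≤ C * |u - v| := by
  have hU : UniqueDiffOn ℝ (Icc (0:ℝ) 1) := uniqueDiffOn_Icc one_pos
  have hd : ContinuousOn (derivWithin γ (Icc 0 1)) (Icc 0 1) :=
    h.continuousOn_derivWithin hU le_rfl
  obtain ⟨x₀, -, hx₀⟩ := isCompact_Icc.exists_isMaxOn (nonempty_Icc.2 one_pos.le)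
    (hd.norm)
  set M : ℝ := ‖derivWithin γ (Icc 0 1) x₀‖
  refine ⟨M + 1, by positivity, fun u hu v hv => ?_⟩
  have key := Convex.norm_image_sub_le_of_norm_hasDerivWithin_le
    (f := γ) (f' := derivWithin γ (Icc 0 1)) (C := M + 1)
    (fun x hx => ((h.differentiableOn one_ne_zero x hx).hasDerivWithinAt))
    (fun x hx => by
      have hb : ‖derivWithin γ (Icc 0 1) x‖ ≤ M := hx₀ hx
      linarith)
    (convex_Icc 0 1) hv hu
  calc ‖γ u - γ v‖ ≤ (M + 1) * ‖u - v‖ := key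
    _ = (M + 1) * |u - v| := by rw [Real.norm_eq_abs]

lemma lower_of_C1Embedding {γ : ℝ → E} (h : ContDiffOn ℝ 1 γ (Icc 0 1))
    (hinj : InjOn γ (Icc 0 1))
    (hne : ∀ u ∈ Icc (0:ℝ) 1, derivWithin γ (Icc 0 1) u ≠ 0) :
    ∃ c > 0, ∀ u ∈ Icc (0:ℝ) 1, ∀ v ∈ Icc (0:ℝ) 1, c * |u - v| ≤ ‖γ u - γ v‖ := by
  have hU : UniqueDiffOn ℝ (Icc (0:ℝ) 1) := uniqueDiffOn_Icc one_pos
  set D := derivWithin γ (Icc 0 1) with hD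
  have hd : ContinuousOn D (Icc 0 1) := h.continuousOn_derivWithin hU le_rfl
  -- minimum of ‖D‖
  obtain ⟨x₀, hx₀mem, hx₀⟩ := isCompact_Icc.exists_isMinOn (nonempty_Icc.2 one_pos.le) hd.norm
  set c₀ : ℝ := ‖D x₀‖ with hc₀
  have hc₀pos : 0 < c₀ := norm_pos_iff.2 (hne x₀ hx₀mem)
  -- uniform continuity of D
  obtain ⟨δ, hδpos, hδ⟩ := Metric.uniformContinuousOn_iff.mp
    (isCompact_Icc.uniformContinuousOn_of_continuous hd) (c₀ / 2) (by linarith)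
  set δ' : ℝ := min δ 1 with hδ'
  have hδ'pos : 0 < δ' := lt_min hδpos one_pos
  -- near-diagonal bound
  have near₀ : ∀ u ∈ Icc (0:ℝ) 1, ∀ v ∈ Icc (0:ℝ) 1, v ≤ u → |u - v| < δ' →
      (c₀ / 2) * |u - v| ≤ ‖γ u - γ v‖ := by
    intro u hu v hv hle hclose
    ·
      have hsub : Icc v u ⊆ Icc 0 1 := Icc_subset_Icc hv.1 hu.2
      have key := Convex.norm_image_sub_le_of_norm_hasDerivWithin_le
        (f := fun z => γ z - z • D v) (f' := fun z => D z - D v) (C := c₀ / 2) (s := Icc v u)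
        (fun x hx => by
          have h1 : HasDerivWithinAt γ (D x) (Icc v u) x :=
            ((h.differentiableOn one_ne_zero x (hsub hx)).hasDerivWithinAt.mono hsub)
          have h2 : HasDerivWithinAt (fun z : ℝ => z • D v) (D v) (Icc v u) x := by
            simpa using (hasDerivWithinAt_id x (Icc v u)).smul_const (D v)
          exact h1.sub h2)
        (fun x hx => by
          have hxI : x ∈ Icc (0:ℝ) 1 := hsub hx
          have : dist x v < δ := by
            rw [Real.dist_eq]
            have : |x - v| ≤ |u - v| := by
              rw [abs_of_nonneg (by linarith [hx.1] : (0:ℝ) ≤ x - v),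
                abs_of_nonneg (by linarith : (0:ℝ) ≤ u - v)]
              linarith [hx.2]
            exact lt_of_le_of_lt this (lt_of_lt_of_le hclose (min_le_left _ _))
          have := hδ x hxI v hv this
          rw [dist_eq_norm] at this
          exact this.le)
        (convex_Icc v u) (left_mem_Icc.2 hle) (right_mem_Icc.2 hle)
      have hDv : c₀ ≤ ‖D v‖ := hx₀ hv
      have expand : γ u - γ v - (u - v) • D v = (γ u - u • D v) - (γ v - v • D v) := by
        module
      have h1 : ‖γ u - γ v - (u - v) • D v‖ ≤ (c₀ / 2) * ‖u - v‖ := by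
        rw [expand]; exact key
      have h2 : ‖(u - v) • D v‖ - ‖γ u - γ v‖ ≤ ‖γ u - γ v - (u - v) • D v‖ := by
        have := norm_sub_norm_le ((u - v) • D v) (γ u - γ v)
        calc ‖(u - v) • D v‖ - ‖γ u - γ v‖ ≤ ‖(u - v) • D v - (γ u - γ v)‖ := this
          _ = ‖γ u - γ v - (u - v) • D v‖ := by rw [norm_sub_rev]
      have h3 : ‖(u - v) • D v‖ = |u - v| * ‖D v‖ := by
        rw [norm_smul, Real.norm_eq_abs]
      have h4 : |u - v| * c₀ ≤ |u - v| * ‖D v‖ :=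
        mul_le_mul_of_nonneg_left hDv (abs_nonneg _)
      have h5 : ‖u - v‖ = |u - v| := Real.norm_eq_abs _
      rw [h5] at h1
      nlinarith [abs_nonneg (u - v)]
  have near : ∀ u ∈ Icc (0:ℝ) 1, ∀ v ∈ Icc (0:ℝ) 1, |u - v| < δ' →
      (c₀ / 2) * |u - v| ≤ ‖γ u - γ v‖ := by
    intro u hu v hv hclose
    rcases le_total v u with hle | hle
    · exact near₀ u hu v hv hle hclose
    · rw [abs_sub_comm] at hclose ⊢
      rw [norm_sub_rev]
      exact near₀ v hv u hu hle hclose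
  -- off-diagonal
  set K : Set (ℝ × ℝ) := (Icc (0:ℝ) 1 ×ˢ Icc (0:ℝ) 1) ∩ {p | δ' ≤ |p.1 - p.2|} with hK
  have hKcomp : IsCompact K := by
    apply (isCompact_Icc.prod isCompact_Icc).inter_right
    have : {p : ℝ × ℝ | δ' ≤ |p.1 - p.2|} = (fun p : ℝ × ℝ => |p.1 - p.2|) ⁻¹' Ici δ' := rfl
    rw [this]
    exact IsClosed.preimage (by continuity) isClosed_Ici
  have hδ'le1 : δ' ≤ 1 := min_le_right _ _
  have hKne : K.Nonempty := by
    refine ⟨(1, 0), ⟨⟨right_mem_Icc.2 one_pos.le, left_mem_Icc.2 one_pos.le⟩, ?_⟩⟩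
    simp only [Set.mem_setOf_eq]
    rw [sub_zero, abs_one]
    exact hδ'le1
  have hcont : ContinuousOn (fun p : ℝ × ℝ => ‖γ p.1 - γ p.2‖) K := by
    have hγ : ContinuousOn γ (Icc 0 1) := h.continuousOn
    apply ContinuousOn.norm
    apply ContinuousOn.sub
    · exact hγ.comp continuous_fst.continuousOn (fun p hp => hp.1.1)
    · exact hγ.comp continuous_snd.continuousOn (fun p hp => hp.1.2)
  obtain ⟨p₀, hp₀mem, hp₀⟩ := hKcomp.exists_isMinOn hKne hcont
  set m : ℝ := ‖γ p₀.1 - γ p₀.2‖ with hm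
  have hmpos : 0 < m := by
    rw [hm, norm_pos_iff, sub_ne_zero]
    intro heq
    have : p₀.1 = p₀.2 := hinj hp₀mem.1.1 hp₀mem.1.2 heq
    have h2 : δ' ≤ |p₀.1 - p₀.2| := hp₀mem.2
    rw [this, sub_self, abs_zero] at h2
    linarith
  refine ⟨min (c₀ / 2) m, lt_min (by linarith) hmpos, fun u hu v hv => ?_⟩
  rcases lt_or_ge |u - v| δ' with hlt | hge
  · calc min (c₀ / 2) m * |u - v| ≤ (c₀ / 2) * |u - v| :=
        mul_le_mul_of_nonneg_right (min_le_left _ _) (abs_nonneg _)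
      _ ≤ ‖γ u - γ v‖ := near u hu v hv hlt
  · have huv : (u, v) ∈ K := ⟨⟨hu, hv⟩, hge⟩
    have hmin : m ≤ ‖γ u - γ v‖ := hp₀ huv
    have habs : |u - v| ≤ 1 := by
      rw [abs_sub_le_iff]
      constructor <;> linarith [hu.1, hu.2, hv.1, hv.2]
    calc min (c₀ / 2) m * |u - v| ≤ m * |u - v| :=
        mul_le_mul_of_nonneg_right (min_le_right _ _) (abs_nonneg _)
      _ ≤ m * 1 := mul_le_mul_of_nonneg_left habs hmpos.le
      _ = m := mul_one m
      _ ≤ ‖γ u - γ v‖ := hmin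

/-- Key comparison estimate: if `δ` is `L`-Lipschitz relative to `γ` and both are bounded
by `R` on `[0,1]`, then the cone map expands distances by at most `(L+1)*(R+1)`. -/
lemma cone_dist_le {γ δ : ℝ → EuclideanSpace ℝ (Fin 3)} {L R : ℝ}
    (hL : 0 ≤ L) (hR : 0 ≤ R)
    (hLip : ∀ u ∈ Icc (0:ℝ) 1, ∀ v ∈ Icc (0:ℝ) 1, ‖δ u - δ v‖ ≤ L * ‖γ u - γ v‖)
    (hbγ : ∀ u ∈ Icc (0:ℝ) 1, ‖γ u‖ ≤ R) (hbδ : ∀ u ∈ Icc (0:ℝ) 1, ‖δ u‖ ≤ R)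
    {s t u v : ℝ} (hs : s ∈ Icc (0:ℝ) 1) (ht : t ∈ Icc (0:ℝ) 1)
    (hu : u ∈ Icc (0:ℝ) 1) (hv : v ∈ Icc (0:ℝ) 1) :
    ‖mk4 (s • δ u) s - mk4 (t • δ v) t‖ ≤
      (L + 1) * (R + 1) * ‖mk4 (s • γ u) s - mk4 (t • γ v) t‖ := by
  set N : ℝ := ‖mk4 (s • γ u) s - mk4 (t • γ v) t‖ with hN
  have hst : |s - t| ≤ N := by
    rw [hN, mk4_sub]; exact abs_le_norm_mk4 _ _
  have hxy : ‖s • γ u - t • γ v‖ ≤ N := by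
    rw [hN, mk4_sub]; exact norm_le_norm_mk4 _ _
  -- s * ‖γ u - γ v‖ ≤ (1 + R) * N
  have hsd : s * ‖γ u - γ v‖ ≤ (1 + R) * N := by
    have e1 : s • γ u - s • γ v = (s • γ u - t • γ v) + ((t - s) • γ v) := by module
    have : ‖s • γ u - s • γ v‖ ≤ ‖s • γ u - t • γ v‖ + ‖(t - s) • γ v‖ := by
      rw [e1]; exact norm_add_le _ _
    have e2 : ‖s • γ u - s • γ v‖ = s * ‖γ u - γ v‖ := by
      rw [← smul_sub, norm_smul, Real.norm_eq_abs, abs_of_nonneg hs.1]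
    have e3 : ‖(t - s) • γ v‖ ≤ |s - t| * R := by
      rw [norm_smul, Real.norm_eq_abs, abs_sub_comm t s]
      exact mul_le_mul_of_nonneg_left (hbγ v hv) (abs_nonneg _)
    have e4 : |s - t| * R ≤ N * R := mul_le_mul_of_nonneg_right hst hR
    nlinarith
  -- main estimate
  have main : ‖s • δ u - t • δ v‖ ≤ L * (s * ‖γ u - γ v‖) + |s - t| * R := by
    have e1 : s • δ u - t • δ v = s • (δ u - δ v) + (s - t) • δ v := by module
    have h1 : ‖s • (δ u - δ v)‖ ≤ L * (s * ‖γ u - γ v‖) := by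
      rw [norm_smul, Real.norm_eq_abs, abs_of_nonneg hs.1]
      calc s * ‖δ u - δ v‖ ≤ s * (L * ‖γ u - γ v‖) :=
            mul_le_mul_of_nonneg_left (hLip u hu v hv) hs.1
        _ = L * (s * ‖γ u - γ v‖) := by ring
    have h2 : ‖(s - t) • δ v‖ ≤ |s - t| * R := by
      rw [norm_smul, Real.norm_eq_abs]
      exact mul_le_mul_of_nonneg_left (hbδ v hv) (abs_nonneg _)
    calc ‖s • δ u - t • δ v‖ ≤ ‖s • (δ u - δ v)‖ + ‖(s - t) • δ v‖ := by
          rw [e1]; exact norm_add_le _ _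
      _ ≤ L * (s * ‖γ u - γ v‖) + |s - t| * R := add_le_add h1 h2
  have hNnn : 0 ≤ N := norm_nonneg _
  calc ‖mk4 (s • δ u) s - mk4 (t • δ v) t‖
      = ‖mk4 (s • δ u - t • δ v) (s - t)‖ := by rw [mk4_sub]
    _ ≤ ‖s • δ u - t • δ v‖ + |s - t| := norm_mk4_le _ _
    _ ≤ (L * (s * ‖γ u - γ v‖) + |s - t| * R) + |s - t| := by linarith
    _ ≤ (L * ((1 + R) * N) + N * R) + N := by
        have := mul_le_mul_of_nonneg_left hsd hL
        nlinarith
    _ ≤ (L + 1) * (R + 1) * N := by nlinarith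

open Classical in
/-- The cone map, defined via choice. -/
def ConePhi (γ₁ γ₂ : ℝ → EuclideanSpace ℝ (Fin 3)) (p : EuclideanSpace ℝ (Fin 4)) :
    EuclideanSpace ℝ (Fin 4) :=
  if h : p ∈ ConeOver γ₁ then mk4 (h.choose • γ₂ h.choose_spec.2.choose) h.choose else p

lemma conePhi_spec {γ₁ : ℝ → EuclideanSpace ℝ (Fin 3)} (γ₂ : ℝ → EuclideanSpace ℝ (Fin 3))
    (hinj : InjOn γ₁ (Icc 0 1)) {s u : ℝ} (hs : s ∈ Icc (0:ℝ) 1) (hu : u ∈ Icc (0:ℝ) 1) :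
    ConePhi γ₁ γ₂ (mk4 (s • γ₁ u) s) = mk4 (s • γ₂ u) s := by
  have hmem : mk4 (s • γ₁ u) s ∈ ConeOver γ₁ := ⟨s, hs, u, hu, rfl⟩
  rw [ConePhi, dif_pos hmem]
  obtain ⟨hs', hrest⟩ := hmem.choose_spec
  obtain ⟨hu', heq⟩ := hrest.choose_spec
  set s' := hmem.choose
  set u' := hrest.choose
  -- heq : mk4 (s • γ₁ u) s = mk4 (s' • γ₁ u') s'
  obtain ⟨hvec, hss⟩ := mk4_inj heq
  rw [← hss] at hvec ⊢
  rcases eq_or_lt_of_le hs.1 with hzero | hpos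
  · -- s = 0
    rw [← hzero]
    ext i
    fin_cases i <;> simp [mk4]
  · have hg : γ₁ u = γ₁ u' :=
      smul_right_injective (EuclideanSpace ℝ (Fin 3)) (ne_of_gt hpos) hvec
    have : u = u' := hinj hu hu' hg
    rw [← this]

end Aux

/-- for `C¹` embeddings `γ₁, γ₂ : [0,1] → ℝ³` with the same endpoints,
the straight cones over them in `ℝ⁴` are bi-Lipschitz equivalent via a bijection `Φ`
preserving the last coordinate and fixing the two boundary rays. -/
theorem cones_over_arcs_biLipschitz (γ₁ γ₂ : ℝ → EuclideanSpace ℝ (Fin 3))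
    (h₁ : IsC1Embedding γ₁) (h₂ : IsC1Embedding γ₂)
    (he0 : γ₁ 0 = γ₂ 0) (he1 : γ₁ 1 = γ₂ 1) :
    ∃ lam : ℝ, 1 ≤ lam ∧
      ∃ Φ : EuclideanSpace ℝ (Fin 4) → EuclideanSpace ℝ (Fin 4),
        Set.BijOn Φ (ConeOver γ₁) (ConeOver γ₂) ∧
        (∀ p ∈ ConeOver γ₁, ∀ q ∈ ConeOver γ₁,
          lam⁻¹ * ‖p - q‖ ≤ ‖Φ p - Φ q‖ ∧ ‖Φ p - Φ q‖ ≤ lam * ‖p - q‖) ∧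
        (∀ s ∈ Set.Icc (0 : ℝ) 1,
          Φ '' (ConeOver γ₁ ∩ {p | p 3 = s}) = ConeOver γ₂ ∩ {p | p 3 = s}) ∧
        (∀ s ∈ Set.Icc (0 : ℝ) 1,
          Φ (mk4 (s • γ₁ 0) s) = mk4 (s • γ₂ 0) s ∧
          Φ (mk4 (s • γ₁ 1) s) = mk4 (s • γ₂ 1) s) := by
  obtain ⟨hcd₁, hinj₁, hne₁⟩ := h₁
  obtain ⟨hcd₂, hinj₂, hne₂⟩ := h₂
  obtain ⟨c₁, hc₁, hlow₁⟩ := lower_of_C1Embedding hcd₁ hinj₁ hne₁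
  obtain ⟨c₂, hc₂, hlow₂⟩ := lower_of_C1Embedding hcd₂ hinj₂ hne₂
  obtain ⟨C₁, hC₁, hup₁⟩ := lip_of_C1 hcd₁
  obtain ⟨C₂, hC₂, hup₂⟩ := lip_of_C1 hcd₂
  set c : ℝ := min c₁ c₂ with hc
  set C : ℝ := max C₁ C₂ with hCdef
  have hcpos : 0 < c := lt_min hc₁ hc₂
  have hCpos : 0 < C := lt_of_lt_of_le hC₁ (le_max_left _ _)
  set L : ℝ := C / c with hLdef
  have hLpos : 0 < L := div_pos hCpos hcpos
  have hLip12 : ∀ u ∈ Icc (0:ℝ) 1, ∀ v ∈ Icc (0:ℝ) 1,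
      ‖γ₂ u - γ₂ v‖ ≤ L * ‖γ₁ u - γ₁ v‖ := by
    intro u hu v hv
    have h1 : ‖γ₂ u - γ₂ v‖ ≤ C * |u - v| :=
      le_trans (hup₂ u hu v hv) (mul_le_mul_of_nonneg_right (le_max_right _ _) (abs_nonneg _))
    have h2 : c * |u - v| ≤ ‖γ₁ u - γ₁ v‖ :=
      le_trans (mul_le_mul_of_nonneg_right (min_le_left _ _) (abs_nonneg _)) (hlow₁ u hu v hv)
    calc ‖γ₂ u - γ₂ v‖ ≤ C * |u - v| := h1
      _ = L * (c * |u - v|) := by rw [hLdef, ← mul_assoc, div_mul_cancel₀ _ hcpos.ne']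
      _ ≤ L * ‖γ₁ u - γ₁ v‖ := mul_le_mul_of_nonneg_left h2 hLpos.le
  have hLip21 : ∀ u ∈ Icc (0:ℝ) 1, ∀ v ∈ Icc (0:ℝ) 1,
      ‖γ₁ u - γ₁ v‖ ≤ L * ‖γ₂ u - γ₂ v‖ := by
    intro u hu v hv
    have h1 : ‖γ₁ u - γ₁ v‖ ≤ C * |u - v| :=
      le_trans (hup₁ u hu v hv) (mul_le_mul_of_nonneg_right (le_max_left _ _) (abs_nonneg _))
    have h2 : c * |u - v| ≤ ‖γ₂ u - γ₂ v‖ :=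
      le_trans (mul_le_mul_of_nonneg_right (min_le_right _ _) (abs_nonneg _)) (hlow₂ u hu v hv)
    calc ‖γ₁ u - γ₁ v‖ ≤ C * |u - v| := h1
      _ = L * (c * |u - v|) := by rw [hLdef, ← mul_assoc, div_mul_cancel₀ _ hcpos.ne']
      _ ≤ L * ‖γ₂ u - γ₂ v‖ := mul_le_mul_of_nonneg_left h2 hLpos.le
  -- bound R
  obtain ⟨x₁, hx₁mem, hx₁⟩ := isCompact_Icc.exists_isMaxOn (nonempty_Icc.2 one_pos.le)
    (hcd₁.continuousOn.norm)
  obtain ⟨x₂, hx₂mem, hx₂⟩ := isCompact_Icc.exists_isMaxOn (nonempty_Icc.2 one_pos.le)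
    (hcd₂.continuousOn.norm)
  set R : ℝ := max ‖γ₁ x₁‖ ‖γ₂ x₂‖ with hRdef
  have hRnn : 0 ≤ R := le_trans (norm_nonneg _) (le_max_left _ _)
  have hbγ₁ : ∀ u ∈ Icc (0:ℝ) 1, ‖γ₁ u‖ ≤ R := fun u hu =>
    le_trans (hx₁ hu) (le_max_left _ _)
  have hbγ₂ : ∀ u ∈ Icc (0:ℝ) 1, ‖γ₂ u‖ ≤ R := fun u hu =>
    le_trans (hx₂ hu) (le_max_right _ _)
  set lam : ℝ := (L + 1) * (R + 1) with hlam
  have hlam1 : 1 ≤ lam := by nlinarith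
  have hlampos : 0 < lam := by linarith
  refine ⟨lam, hlam1, ConePhi γ₁ γ₂, ?_, ?_, ?_, ?_⟩
  · -- BijOn
    refine ⟨?_, ?_, ?_⟩
    · rintro p ⟨s, hs, u, hu, rfl⟩
      rw [conePhi_spec γ₂ hinj₁ hs hu]
      exact ⟨s, hs, u, hu, rfl⟩
    · rintro p ⟨s, hs, u, hu, rfl⟩ q ⟨t, ht, v, hv, rfl⟩ heq
      rw [conePhi_spec γ₂ hinj₁ hs hu, conePhi_spec γ₂ hinj₁ ht hv] at heq
      obtain ⟨hvec, hst⟩ := mk4_inj heq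
      subst hst
      rcases eq_or_lt_of_le hs.1 with hzero | hpos
      · rw [← hzero, zero_smul, zero_smul]
      · have hguv : γ₂ u = γ₂ v :=
          smul_right_injective (EuclideanSpace ℝ (Fin 3)) (ne_of_gt hpos) hvec
        rw [hinj₂ hu hv hguv]
    · rintro q ⟨s, hs, u, hu, rfl⟩
      exact ⟨mk4 (s • γ₁ u) s, ⟨s, hs, u, hu, rfl⟩, conePhi_spec γ₂ hinj₁ hs hu⟩
  · -- bi-Lipschitz
    rintro p ⟨s, hs, u, hu, rfl⟩ q ⟨t, ht, v, hv, rfl⟩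
    rw [conePhi_spec γ₂ hinj₁ hs hu, conePhi_spec γ₂ hinj₁ ht hv]
    constructor
    · rw [inv_mul_le_iff₀ hlampos]
      exact cone_dist_le hLpos.le hRnn hLip21 hbγ₂ hbγ₁ hs ht hu hv
    · exact cone_dist_le hLpos.le hRnn hLip12 hbγ₁ hbγ₂ hs ht hu hv
  · -- slices
    intro s hs
    apply Set.Subset.antisymm
    · rintro x ⟨p, ⟨⟨s', hs', u, hu, rfl⟩, hp3⟩, rfl⟩
      have hs'' : s' = s := by rw [← mk4_three (s' • γ₁ u) s']; exact hp3
      subst hs''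
      rw [conePhi_spec γ₂ hinj₁ hs' hu]
      exact ⟨⟨s', hs', u, hu, rfl⟩, mk4_three _ _⟩
    · rintro q ⟨⟨s', hs', u, hu, rfl⟩, hq3⟩
      have hs'' : s' = s := by rw [← mk4_three (s' • γ₂ u) s']; exact hq3
      subst hs''
      exact ⟨mk4 (s' • γ₁ u) s', ⟨⟨s', hs', u, hu, rfl⟩, mk4_three _ _⟩,
        conePhi_spec γ₂ hinj₁ hs' hu⟩
  · -- rays
    intro s hs
    exact ⟨conePhi_spec γ₂ hinj₁ hs (left_mem_Icc.2 one_pos.le),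
      conePhi_spec γ₂ hinj₁ hs (right_mem_Icc.2 one_pos.le)⟩
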